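/- Let λ = (λ₁ ≥ λ₂ ≥ ...) be a partition of 2r in which every even part occurs an even number of times (a D-partition). Let (ξ, η) be the unordered pair of partitions with |ξ| + |η| = r obtained from λ by the Carter–Lusztig symbol procedure for type D. Then: (i) if λ₁ is odd, then max(L(ξ), L(η)) = (λ₁+1)/2; (ii) if λ₁ is odd and λ₂ = λ₁, then {L(ξ), L(η)} = {(λ₁+1)/2, (λ₁−1)/2}; (iii) if λ₁ is even (so λ₂ = λ₁), then L(ξ) = L(η) = λ₁/2. Here L(μ) denotes the largest part of a partition μ. -/

import Mathlib

/-!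
STATEMENT 5: Properties of the type-D symbol map `φ_D`.  A partition `l` of `2r`
(weakly decreasing list of positive integers) in which every even part occurs an
even number of times is sent to the unordered pair of partitions `(ξ, η)` by:
padding to even length, forming the strictly increasing sequence `λ*_i = λ_i + (i-1)`
(read in increasing order), splitting into even entries `2x` and odd entries `2y+1`,
and subtracting staircases.  Claims (with `L` = largest part, `λ₁ = l.headD 0`,
`λ₂ = l.getD 1 0`):
|ξ|+|η| = r; (i) λ₁ odd ⇒ max(Lξ, Lη) = (λ₁+1)/2;
(ii) λ₁ odd and λ₂ = λ₁ ⇒ {Lξ, Lη} = {(λ₁+1)/2, (λ₁−1)/2};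
(iii) λ₁ even ⇒ Lξ = Lη = λ₁/2.
-/

namespace Stmt5

/-- Largest part of a partition given as a list. -/
def Lp (l : List ℕ) : ℕ := l.foldr max 0

/-- Pad a (decreasing) partition with a trailing zero to make its length even. -/
def padEven (l : List ℕ) : List ℕ := if Even l.length then l else l ++ [0]

/-- `λ*`: read the padded partition in increasing order and add `(i-1)` to the
`i`-th entry (0-indexed: add `i`). -/
def starSeq (l : List ℕ) : List ℕ :=
  List.zipWith (· + ·) l.reverse (List.range l.length)

/-- Halves of the even entries (`2x ↦ x`), in increasing order. -/
def evenHalves (s : List ℕ) : List ℕ := (s.filter (fun x => x % 2 = 0)).map (· / 2)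

/-- Halves of the odd entries (`2y+1 ↦ y`), in increasing order. -/
def oddHalves (s : List ℕ) : List ℕ := (s.filter (fun x => x % 2 = 1)).map (· / 2)

/-- Subtract the staircase `(0,1,2,…)` from an increasing sequence. -/
def unstair (s : List ℕ) : List ℕ :=
  List.zipWith (fun a i => a - i) s (List.range s.length)

/-- First member of the unordered pair `φ_D(l)` (from the even entries of `λ*`). -/
def xiD (l : List ℕ) : List ℕ := unstair (evenHalves (starSeq (padEven l)))

/-- Second member of the unordered pair `φ_D(l)` (from the odd entries of `λ*`). -/
def etaD (l : List ℕ) : List ℕ := unstair (oddHalves (starSeq (padEven l)))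


lemma lp_cons (a : ℕ) (t : List ℕ) : Lp (a :: t) = max a (Lp t) := rfl

lemma le_lp {u : List ℕ} {x : ℕ} (h : x ∈ u) : x ≤ Lp u := by
  induction u with
  | nil => simp at h
  | cons a t ih =>
    rw [lp_cons]
    rcases List.mem_cons.mp h with h | h
    · omega
    · have := ih h; omega

lemma lp_le {u : List ℕ} {X : ℕ} (h : ∀ x ∈ u, x ≤ X) : Lp u ≤ X := by
  induction u with
  | nil => simp [Lp]
  | cons a t ih =>
    rw [lp_cons]
    have h1 := h a (by simp)
    have h2 := ih (fun x hx => h x (by simp [hx]))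
    omega

private lemma gap' {v : List ℕ} (hv : v.Pairwise (· < ·)) :
    ∀ (i d : ℕ) (h : i + d < v.length), v[i]'(by omega) + d ≤ v[i + d]'h := by
  intro i d
  induction d with
  | zero => intro h; simp
  | succ d ih =>
    intro h
    have h1 : i + d < v.length := by omega
    have h2 := ih h1
    have h3 : v[i + d]'h1 < v[i + d + 1]'(by omega) :=
      List.pairwise_iff_getElem.mp hv _ _ h1 (by omega) (by omega)
    have h4 : v[i + (d + 1)]'h = v[i + d + 1]'(by omega) := rfl
    omega

lemma gap {v : List ℕ} (hv : v.Pairwise (· < ·)) {i j : ℕ} (hij : i ≤ j)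
    (hj : j < v.length) : v[i]'(by omega) + (j - i) ≤ v[j] := by
  have := gap' hv i (j - i) (by omega)
  have e : i + (j - i) = j := by omega
  simp only [e] at this
  exact this

lemma lp_eq_last {v : List ℕ} (hv : v.Pairwise (· < ·)) (hne : v ≠ []) :
    Lp v = v[v.length - 1]'(by have := List.length_pos_iff.mpr hne; omega) := by
  have hl : 0 < v.length := List.length_pos_iff.mpr hne
  apply le_antisymm
  · apply lp_le; intro x hx
    obtain ⟨i, hi, rfl⟩ := List.getElem_of_mem hx
    have := gap hv (i := i) (j := v.length - 1) (by omega) (by omega)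
    omega
  · exact le_lp (List.getElem_mem _)

lemma unstair_length (v : List ℕ) : (unstair v).length = v.length := by
  simp [unstair]

lemma unstair_getElem (v : List ℕ) (j : ℕ) (h : j < v.length) :
    (unstair v)[j]'(by simp [unstair_length]; omega) = v[j] - j := by
  simp [unstair]

lemma lp_unstair {v : List ℕ} (hv : v.Pairwise (· < ·)) (hne : v ≠ []) :
    Lp (unstair v) + (v.length - 1) = Lp v := by
  have hl : 0 < v.length := List.length_pos_iff.mpr hne
  have hlast : v.length - 1 ≤ v[v.length - 1]'(by omega) := by
    have := gap hv (i := 0) (j := v.length - 1) (by omega) (by omega)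
    omega
  rw [lp_eq_last hv hne]
  have hub : Lp (unstair v) ≤ v[v.length - 1]'(by omega) - (v.length - 1) := by
    apply lp_le; intro x hx
    obtain ⟨i, hi, rfl⟩ := List.getElem_of_mem hx
    rw [unstair_length] at hi
    rw [unstair_getElem v i hi]
    have := gap hv (i := i) (j := v.length - 1) (by omega) (by omega)
    omega
  have hlb : v[v.length - 1]'(by omega) - (v.length - 1) ≤ Lp (unstair v) := by
    have hmem : (unstair v)[v.length - 1]'(by rw [unstair_length]; omega) ∈ unstair v :=
      List.getElem_mem _
    rw [unstair_getElem v _ (by omega)] at hmem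
    exact le_lp hmem
  omega


/-- Parity counter: number of `j` with `a_j + i + j` even. -/
def cnt : List ℕ → ℕ → ℕ
  | [], _ => 0
  | x :: t, i => (if (x + i) % 2 = 0 then 1 else 0) + cnt t (i + 1)

lemma cnt_mod (t : List ℕ) : ∀ i, cnt t (i + 2) = cnt t i := by
  induction t with
  | nil => intro i; rfl
  | cons x t ih =>
    intro i
    show (if (x + (i + 2)) % 2 = 0 then 1 else 0) + cnt t (i + 2 + 1)
        = (if (x + i) % 2 = 0 then 1 else 0) + cnt t (i + 1)
    have : cnt t (i + 1 + 2) = cnt t (i + 1) := ih (i + 1)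
    have e : i + 2 + 1 = i + 1 + 2 := by omega
    rw [e, this]
    congr 1
    have e2 : (x + (i + 2)) % 2 = (x + i) % 2 := by omega
    rw [e2]

lemma cnt_eq_aux : ∀ (N : ℕ) (a : List ℕ), a.length ≤ N → a.Pairwise (· ≤ ·) →
    (∀ k, Even k → Even (a.count k)) → ∀ i, cnt a i = (a.length + i % 2) / 2 := by
  intro N
  induction N with
  | zero =>
    intro a hlen _ _ i
    have : a = [] := List.length_eq_zero_iff.mp (by omega)
    subst this; simp [cnt]
  | succ N ih =>
    intro a hlen hsort hD i
    obtain - | ⟨x, t0⟩ := a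
    · simp [cnt]
    obtain - | ⟨y, t⟩ := t0
    · -- singleton [x]
      have h1 : (List.count x [x]) = 1 := by simp
      have hx2 : x % 2 = 1 := by
        by_contra hx
        have hxe : Even x := by rw [Nat.even_iff]; omega
        have h6 := hD x hxe
        rw [h1, Nat.even_iff] at h6
        omega
      show (if (x + i) % 2 = 0 then 1 else 0) + cnt [] (i + 1) = (1 + i % 2) / 2
      simp only [cnt]
      split <;> omega
    · have hxy : x ≤ y := (List.pairwise_cons.mp hsort).1 y (by simp)
      have hsort' : (y :: t).Pairwise (· ≤ ·) := hsort.of_cons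
      by_cases hxyeq : x = y
      · subst hxyeq
        -- remove the pair
        have hDt : ∀ k, Even k → Even (t.count k) := by
          intro k hk
          have := hD k hk
          rw [List.count_cons, List.count_cons] at this
          rcases this with ⟨m, hm⟩
          rw [Nat.even_iff]
          split at hm <;> omega
        have hst : t.Pairwise (· ≤ ·) := hsort'.of_cons
        have hrec := ih t (by simp at hlen ⊢; omega) hst hDt i
        show (if (x + i) % 2 = 0 then 1 else 0) +
            ((if (x + (i + 1)) % 2 = 0 then 1 else 0) + cnt t (i + 1 + 1)) = _
        have hmod : cnt t (i + 1 + 1) = cnt t i := by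
          have h5 := cnt_mod t i
          have e : i + 2 = i + 1 + 1 := by omega
          rw [e] at h5
          exact h5
        rw [hmod, hrec]
        simp only [List.length_cons]
        split <;> split <;> omega
      · -- x < y, x occurs once, hence x odd
        have hxlt : x < y := by omega
        have hxnot : x ∉ y :: t := by
          intro hmem
          rcases List.mem_cons.mp hmem with h | h
          · omega
          · have := (List.pairwise_cons.mp hsort').1 x h
            omega
        have hcx : List.count x (y :: t) = 0 := List.count_eq_zero.mpr hxnot
        have hxodd : x % 2 = 1 := by
          by_contra hx
          have hxe : Even x := by rw [Nat.even_iff]; omega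
          have h6 := hD x hxe
          rw [List.count_cons, hcx] at h6
          simp only [beq_self_eq_true, if_true, Nat.even_iff] at h6
          omega
        have hDyt : ∀ k, Even k → Even ((y :: t).count k) := by
          intro k hk
          have hk2 := hD k hk
          rw [List.count_cons (b := x)] at hk2
          have hkx : (x == k) = false := by
            have : ¬ (x = k) := by
              intro h; subst h
              rw [Nat.even_iff] at hk; omega
            simp [this]
          rw [hkx] at hk2
          simpa using hk2
        have hrec := ih (y :: t) (by simp at hlen ⊢; omega) hsort' hDyt (i + 1)
        show (if (x + i) % 2 = 0 then 1 else 0) + cnt (y :: t) (i + 1) = _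
        rw [hrec]
        simp only [List.length_cons]
        split <;> omega

lemma cnt_eq (a : List ℕ) (hsort : a.Pairwise (· ≤ ·))
    (hD : ∀ k, Even k → Even (a.count k)) (i : ℕ) :
    cnt a i = (a.length + i % 2) / 2 :=
  cnt_eq_aux a.length a le_rfl hsort hD i

lemma filter_zip_len : ∀ (a : List ℕ) (i : ℕ),
    ((List.zipWith (· + ·) a (List.range' i a.length)).filter (fun x => x % 2 = 0)).length
      = cnt a i := by
  intro a
  induction a with
  | nil => intro i; simp [cnt]
  | cons x t ih =>
    intro i
    rw [List.length_cons, List.range'_succ, List.zipWith_cons_cons, List.filter_cons]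
    have hc : cnt (x :: t) i = (if (x + i) % 2 = 0 then 1 else 0) + cnt t (i + 1) := rfl
    rw [hc, ← ih (i + 1)]
    by_cases h : (x + i) % 2 = 0
    · simp [h]; omega
    · simp [h]

lemma len_split : ∀ u : List ℕ,
    (u.filter (fun x => x % 2 = 0)).length + (u.filter (fun x => x % 2 = 1)).length
      = u.length := by
  intro u
  induction u with
  | nil => simp
  | cons x t ih =>
    rw [List.filter_cons, List.filter_cons]
    by_cases h : x % 2 = 0
    · have h1 : ¬ (x % 2 = 1) := by omega
      simp [h, h1]; omega
    · have h1 : x % 2 = 1 := by omega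
      simp [h, h1]; omega

lemma sum_split : ∀ u : List ℕ,
    (u.filter (fun x => x % 2 = 0)).sum + (u.filter (fun x => x % 2 = 1)).sum
      = u.sum := by
  intro u
  induction u with
  | nil => simp
  | cons x t ih =>
    rw [List.filter_cons, List.filter_cons]
    by_cases h : x % 2 = 0
    · have h1 : ¬ (x % 2 = 1) := by omega
      simp [h, h1]; omega
    · have h1 : x % 2 = 1 := by omega
      simp [h, h1]; omega

lemma sum_zip_add : ∀ (u w : List ℕ), u.length = w.length →
    (List.zipWith (· + ·) u w).sum = u.sum + w.sum := by
  intro u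
  induction u with
  | nil =>
    intro w h
    have : w = [] := List.length_eq_zero_iff.mp (by simpa using h.symm)
    subst this; simp
  | cons x t ih =>
    intro w h
    match w with
    | [] => simp at h
    | y :: w' =>
      simp only [List.zipWith_cons_cons, List.sum_cons]
      rw [ih w' (by simpa using h)]
      omega

lemma gauss : ∀ n : ℕ, 2 * (List.range n).sum + n = n * n := by
  intro n
  induction n with
  | zero => simp
  | succ n ih =>
    rw [List.range_succ, List.sum_append]
    simp only [List.sum_cons, List.sum_nil]
    nlinarith

lemma sum_unstair' : ∀ (v : List ℕ) (i : ℕ),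
    (∀ j (h : j < v.length), i + j ≤ v[j]) →
    (List.zipWith (fun a b => a - b) v (List.range' i v.length)).sum
      + (List.range' i v.length).sum = v.sum := by
  intro v
  induction v with
  | nil => intro i _; simp
  | cons x t ih =>
    intro i h
    rw [List.length_cons, List.range'_succ]
    simp only [List.zipWith_cons_cons, List.sum_cons]
    have h0 : i ≤ x := by have := h 0 (by simp); simpa using this
    have := ih (i + 1) (fun j hj => by
      have h2 := h (j + 1) (by simp only [List.length_cons]; omega)
      simp only [List.getElem_cons_succ] at h2
      omega)
    omega

lemma sum_unstair {v : List ℕ} (hv : v.Pairwise (· < ·)) :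
    (unstair v).sum + (List.range v.length).sum = v.sum := by
  rw [unstair, List.range_eq_range']
  apply sum_unstair'
  intro j hj
  rcases Nat.eq_zero_or_pos j with h0 | h0
  · subst h0; simp
  · have := gap hv (i := 0) (j := j) (by omega) hj
    omega

lemma sum_map_half_even {u : List ℕ} (h : ∀ x ∈ u, x % 2 = 0) :
    2 * (u.map (· / 2)).sum = u.sum := by
  induction u with
  | nil => simp
  | cons x t ih =>
    simp only [List.map_cons, List.sum_cons]
    have hx := h x (by simp)
    have := ih (fun y hy => h y (by simp [hy]))
    omega

lemma sum_map_half_odd {u : List ℕ} (h : ∀ x ∈ u, x % 2 = 1) :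
    2 * (u.map (· / 2)).sum + u.length = u.sum := by
  induction u with
  | nil => simp
  | cons x t ih =>
    simp only [List.map_cons, List.sum_cons, List.length_cons]
    have hx := h x (by simp)
    have := ih (fun y hy => h y (by simp [hy]))
    omega

lemma lp_map_half (u : List ℕ) : Lp (u.map (· / 2)) = Lp u / 2 := by
  induction u with
  | nil => simp [Lp]
  | cons x t ih =>
    simp only [List.map_cons]
    rw [lp_cons, lp_cons, ih]
    rcases le_total x (Lp t) with h | h
    · rw [max_eq_right h, max_eq_right (Nat.div_le_div_right h)]
    · rw [max_eq_left h, max_eq_left (Nat.div_le_div_right h)]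

lemma even_length_of_even_counts : ∀ (N : ℕ) (m : List ℕ), m.length ≤ N →
    (∀ k, Even (m.count k)) → Even m.length := by
  intro N
  induction N with
  | zero =>
    intro m h _
    have : m = [] := List.length_eq_zero_iff.mp (by omega)
    subst this; simp
  | succ N ih =>
    intro m hlen hc
    match m with
    | [] => simp
    | x :: t =>
      have hx : Even ((x :: t).count x) := hc x
      have hx1 : 1 ≤ (x :: t).count x := List.count_pos_iff.mpr (by simp)
      have hx2 : 2 ≤ (x :: t).count x := by
        rcases hx with ⟨m', hm'⟩; omega
      have hxt : x ∈ t := by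
        rw [← List.count_pos_iff]
        rw [List.count_cons] at hx2
        simp only [beq_self_eq_true, if_true] at hx2
        omega
      have htpos : 1 ≤ t.length := List.length_pos_iff.mpr (by rintro rfl; simp at hxt)
      have hlen' : (t.erase x).length = t.length - 1 := List.length_erase_of_mem hxt
      have hct : ∀ k, Even ((t.erase x).count k) := by
        intro k
        rw [List.count_erase]
        have hk := hc k
        rw [List.count_cons] at hk
        rw [Nat.even_iff] at hk ⊢
        by_cases hkx : k = x
        · subst hkx
          simp only [beq_self_eq_true, if_true] at hk ⊢
          have := List.count_pos_iff.mpr hxt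
          omega
        · have hbe : (x == k) = false := by
            simp [Ne.symm hkx]
          rw [hbe] at hk ⊢
          simpa using hk
      have := ih (t.erase x) (by simp at hlen; omega) hct
      rw [Nat.even_iff] at this ⊢
      simp only [List.length_cons]
      omega


lemma sum_mod : ∀ u : List ℕ, u.sum % 2 = (u.filter (fun x => x % 2 = 1)).length % 2 := by
  intro u
  induction u with
  | nil => simp
  | cons x t ih =>
    rw [List.filter_cons]
    by_cases h : x % 2 = 1
    · rw [if_pos (by simp [h])]
      simp only [List.sum_cons, List.length_cons]
      omega
    · rw [if_neg (by simp [h])]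
      simp only [List.sum_cons]
      omega

lemma filter_mem_mod {s : List ℕ} {c : ℕ} :
    ∀ z ∈ s.filter (fun z => z % 2 = c), z % 2 = c := fun z hz => by
  simpa using List.of_mem_filter hz

lemma filter_pairwise_lt {s : List ℕ} (hs : s.Pairwise (· < ·)) (c : ℕ) :
    (s.filter (fun z => z % 2 = c)).Pairwise (· < ·) :=
  List.Pairwise.sublist List.filter_sublist hs

lemma halves_pairwise {s : List ℕ} (hs : s.Pairwise (· < ·)) (c : ℕ) :
    ((s.filter (fun z => z % 2 = c)).map (· / 2)).Pairwise (· < ·) := by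
  rw [List.pairwise_map]
  have hF := filter_pairwise_lt hs c
  refine List.Pairwise.imp_of_mem ?_ hF
  intro a b ha hb hab
  have h1 := filter_mem_mod a ha
  have h2 := filter_mem_mod b hb
  omega

lemma side_lp {s : List ℕ} (hs : s.Pairwise (· < ·)) (c : ℕ)
    (hne : (s.filter (fun z => z % 2 = c)) ≠ []) :
    Lp (unstair ((s.filter (fun z => z % 2 = c)).map (· / 2)))
      + ((s.filter (fun z => z % 2 = c)).length - 1)
      = Lp (s.filter (fun z => z % 2 = c)) / 2 := by
  have hv := halves_pairwise hs c
  have hnem : ((s.filter (fun z => z % 2 = c)).map (· / 2)) ≠ [] := by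
    simpa using hne
  have h := lp_unstair hv hnem
  rw [lp_map_half, List.length_map] at h
  exact h

lemma side_sum {s : List ℕ} (hs : s.Pairwise (· < ·)) (c : ℕ) :
    (unstair ((s.filter (fun z => z % 2 = c)).map (· / 2))).sum
      + (List.range (s.filter (fun z => z % 2 = c)).length).sum
      = ((s.filter (fun z => z % 2 = c)).map (· / 2)).sum := by
  have hv := halves_pairwise hs c
  have h := sum_unstair hv
  rw [List.length_map] at h
  exact h


set_option maxHeartbeats 2000000 in
theorem stmt5 (r : ℕ) (hr : 0 < r) (l : List ℕ)
    (hsort : l.Pairwise (· ≥ ·))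
    (hpos : ∀ x ∈ l, 0 < x)
    (hsum : l.sum = 2 * r)
    (hD : ∀ k : ℕ, Even k → Even (l.count k)) :
    ((xiD l).sum + (etaD l).sum = r) ∧
    (Odd (l.headD 0) →
      max (Lp (xiD l)) (Lp (etaD l)) = (l.headD 0 + 1) / 2) ∧
    (Odd (l.headD 0) → l.getD 1 0 = l.headD 0 →
      ((Lp (xiD l) = (l.headD 0 + 1) / 2 ∧ Lp (etaD l) = (l.headD 0 - 1) / 2) ∨
       (Lp (etaD l) = (l.headD 0 + 1) / 2 ∧ Lp (xiD l) = (l.headD 0 - 1) / 2))) ∧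
    (Even (l.headD 0) →
      Lp (xiD l) = l.headD 0 / 2 ∧ Lp (etaD l) = l.headD 0 / 2) := by
  -- the length of `l` is even
  have hE0 : Even ((l.filter (fun x => x % 2 = 0)).length) := by
    refine even_length_of_even_counts (l.filter (fun x => x % 2 = 0)).length _ le_rfl ?_
    intro k
    by_cases hk : k % 2 = 0
    · have hck : (l.filter (fun x => x % 2 = 0)).count k = l.count k := by
        apply List.count_filter
        simp [hk]
      rw [hck]
      exact hD k (by rw [Nat.even_iff]; omega)
    · have hck : (l.filter (fun x => x % 2 = 0)).count k = 0 := by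
        rw [List.count_eq_zero]
        intro hmem
        have := filter_mem_mod k hmem
        omega
      rw [hck]; simp
  have hO0 : (l.filter (fun x => x % 2 = 1)).length % 2 = 0 := by
    have := sum_mod l; rw [hsum] at this; omega
  have hnE : Even l.length := by
    have := len_split l
    rw [Nat.even_iff] at hE0 ⊢
    omega
  have hne : l ≠ [] := by rintro rfl; simp at hsum; omega
  have hn2 : 2 ≤ l.length := by
    have h1 : l.length ≠ 0 := by simpa using hne
    rw [Nat.even_iff] at hnE; omega
  obtain - | ⟨x, l1⟩ := l
  · simp at hsum; omega
  obtain - | ⟨y, t⟩ := l1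
  · rw [Nat.even_iff] at hnE; simp at hnE
  -- basic numerology
  obtain ⟨m, hm⟩ : ∃ m, t.length + 2 = 2 * m := by
    rw [Nat.even_iff] at hnE; simp only [List.length_cons] at hnE
    exact ⟨(t.length + 2) / 2, by omega⟩
  have hm1 : 1 ≤ m := by omega
  have htpar : t.length % 2 = 0 := by omega
  -- padding is trivial
  have hpad : padEven (x :: y :: t) = x :: y :: t := by
    rw [padEven, if_pos hnE]
  have hxi : xiD (x :: y :: t)
      = unstair (((starSeq (x :: y :: t)).filter (fun x => x % 2 = 0)).map (· / 2)) := by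
    simp only [xiD, evenHalves, hpad]
  have heta : etaD (x :: y :: t)
      = unstair (((starSeq (x :: y :: t)).filter (fun x => x % 2 = 1)).map (· / 2)) := by
    simp only [etaD, oddHalves, hpad]
  -- the star sequence
  have hSlen : (starSeq (x :: y :: t)).length = t.length + 2 := by
    simp [starSeq]
  have hrev : (x :: y :: t).reverse.Pairwise (· ≤ ·) := by
    rw [List.pairwise_reverse]
    exact hsort
  have hrevlen : (x :: y :: t).reverse.length = t.length + 2 := by simp
  have hSget : ∀ (i : ℕ) (h : i < t.length + 2),
      (starSeq (x :: y :: t))[i]'(by rw [hSlen]; omega)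
        = ((x :: y :: t).reverse[i]'(by rw [hrevlen]; omega)) + i := by
    intro i h
    simp only [starSeq, List.getElem_zipWith, List.getElem_range]
  have hSsort : (starSeq (x :: y :: t)).Pairwise (· < ·) := by
    rw [List.pairwise_iff_getElem]
    intro i j hi hj hij
    rw [hSlen] at hi hj
    rw [hSget i hi, hSget j hj]
    have := List.pairwise_iff_getElem.mp hrev i j (by rw [hrevlen]; omega)
      (by rw [hrevlen]; omega) hij
    omega
  have hSne : starSeq (x :: y :: t) ≠ [] := by
    intro h; rw [h] at hSlen; simp at hSlen
  -- top two elements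
  have htopel : (starSeq (x :: y :: t))[t.length + 1]'(by rw [hSlen]; omega)
      = x + (t.length + 1) := by
    rw [hSget (t.length + 1) (by omega)]
    congr 1
    rw [List.getElem_reverse]
    simp only [List.length_cons]
    simp only [show t.length + 1 + 1 - 1 - (t.length + 1) = 0 from by omega]
    rfl
  have hsecel : (starSeq (x :: y :: t))[t.length]'(by rw [hSlen]; omega)
      = y + t.length := by
    rw [hSget t.length (by omega)]
    congr 1
    rw [List.getElem_reverse]
    simp only [List.length_cons]
    simp only [show t.length + 1 + 1 - 1 - t.length = 1 from by omega]
    rfl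
  have hLpS : Lp (starSeq (x :: y :: t)) = x + (t.length + 1) := by
    rw [lp_eq_last hSsort hSne]
    have e : (starSeq (x :: y :: t)).length - 1 = t.length + 1 := by rw [hSlen]; omega
    simp only [e]
    exact htopel
  have htopmem : x + (t.length + 1) ∈ starSeq (x :: y :: t) := by
    rw [← htopel]; exact List.getElem_mem _
  have hsecmem : y + t.length ∈ starSeq (x :: y :: t) := by
    rw [← hsecel]; exact List.getElem_mem _
  -- lengths of the two filtered lists
  have hstar_eq : starSeq (x :: y :: t)
      = List.zipWith (· + ·) (x :: y :: t).reverse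
          (List.range' 0 (x :: y :: t).reverse.length) := by
    rw [starSeq, List.range_eq_range', List.length_reverse]
  have hElen : ((starSeq (x :: y :: t)).filter (fun x => x % 2 = 0)).length = m := by
    rw [hstar_eq, filter_zip_len]
    rw [cnt_eq _ hrev (fun k hk => by rw [List.count_reverse]; exact hD k hk)]
    rw [hrevlen]
    omega
  have hOlen : ((starSeq (x :: y :: t)).filter (fun x => x % 2 = 1)).length = m := by
    have := len_split (starSeq (x :: y :: t))
    rw [hSlen, hElen] at this
    omega
  have hEne : ((starSeq (x :: y :: t)).filter (fun x => x % 2 = 0)) ≠ [] := by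
    intro h; rw [h] at hElen; simp at hElen; omega
  have hOne : ((starSeq (x :: y :: t)).filter (fun x => x % 2 = 1)) ≠ [] := by
    intro h; rw [h] at hOlen; simp at hOlen; omega
  -- Lp equations for the two sides
  have hxiLp := side_lp hSsort 0 hEne
  rw [← hxi, hElen] at hxiLp
  have hetaLp := side_lp hSsort 1 hOne
  rw [← heta, hOlen] at hetaLp
  -- upper bounds for elements
  have hEub : ∀ z ∈ (starSeq (x :: y :: t)).filter (fun x => x % 2 = 0),
      z ≤ x + (t.length + 1) := fun z hz => by
    have := le_lp (List.mem_of_mem_filter hz)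
    rw [hLpS] at this; exact this
  have hOub : ∀ z ∈ (starSeq (x :: y :: t)).filter (fun x => x % 2 = 1),
      z ≤ x + (t.length + 1) := fun z hz => by
    have := le_lp (List.mem_of_mem_filter hz)
    rw [hLpS] at this; exact this
  -- head and second entries of the goal
  have hhead : (x :: y :: t).headD 0 = x := rfl
  have hgetd : (x :: y :: t).getD 1 0 = y := rfl
  refine ⟨?_, ?_, ?_, ?_⟩
  · -- sum claim
    have hxs := side_sum hSsort 0
    rw [← hxi, hElen] at hxs
    have hys := side_sum hSsort 1
    rw [← heta, hOlen] at hys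
    have h2vE := sum_map_half_even
      (u := (starSeq (x :: y :: t)).filter (fun x => x % 2 = 0)) filter_mem_mod
    have h2vO := sum_map_half_odd
      (u := (starSeq (x :: y :: t)).filter (fun x => x % 2 = 1)) filter_mem_mod
    rw [hOlen] at h2vO
    have hsplit := sum_split (starSeq (x :: y :: t))
    have hSsum : (starSeq (x :: y :: t)).sum
        = 2 * r + (List.range (t.length + 2)).sum := by
      rw [starSeq]
      rw [sum_zip_add _ _ (by simp)]
      rw [List.sum_reverse]
      rw [hsum]
      simp only [List.length_cons]
    have hg1 := gauss (t.length + 2)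
    have hg2 := gauss m
    obtain ⟨P, hP⟩ : ∃ P, P = m * m := ⟨_, rfl⟩
    have hg1' : 2 * (List.range (t.length + 2)).sum + (t.length + 2) = 4 * P := by
      rw [hg1, hP, hm]; ring
    rw [← hP] at hg2
    rw [hSsum] at hsplit
    omega
  · -- claim (i)
    intro hodd
    rw [hhead] at hodd ⊢
    have hx2 : x % 2 = 1 := Nat.odd_iff.mp hodd
    have htE : x + (t.length + 1) ∈
        (starSeq (x :: y :: t)).filter (fun x => x % 2 = 0) :=
      List.mem_filter.mpr ⟨htopmem, by simp; omega⟩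
    have hLpE : Lp ((starSeq (x :: y :: t)).filter (fun x => x % 2 = 0))
        = x + (t.length + 1) :=
      le_antisymm (lp_le hEub) (le_lp htE)
    have hLpO_le : Lp ((starSeq (x :: y :: t)).filter (fun x => x % 2 = 1))
        ≤ x + t.length := lp_le fun z hz => by
      have h1 := hOub z hz
      have h2 := filter_mem_mod z hz
      omega
    rw [hLpE] at hxiLp
    have hd : Lp ((starSeq (x :: y :: t)).filter (fun x => x % 2 = 1)) / 2
        ≤ (x + t.length) / 2 := Nat.div_le_div_right hLpO_le
    omega
  · -- claim (ii)
    intro hodd heq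
    rw [hhead] at hodd ⊢
    rw [hgetd, hhead] at heq
    have hx2 : x % 2 = 1 := Nat.odd_iff.mp hodd
    have htE : x + (t.length + 1) ∈
        (starSeq (x :: y :: t)).filter (fun x => x % 2 = 0) :=
      List.mem_filter.mpr ⟨htopmem, by simp; omega⟩
    have hLpE : Lp ((starSeq (x :: y :: t)).filter (fun x => x % 2 = 0))
        = x + (t.length + 1) :=
      le_antisymm (lp_le hEub) (le_lp htE)
    have hsecmem' : x + t.length ∈ starSeq (x :: y :: t) := by
      have e : x + t.length = y + t.length := by omega
      rw [e]; exact hsecmem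
    have hsO : x + t.length ∈
        (starSeq (x :: y :: t)).filter (fun x => x % 2 = 1) :=
      List.mem_filter.mpr ⟨hsecmem', by simp; omega⟩
    have hLpO : Lp ((starSeq (x :: y :: t)).filter (fun x => x % 2 = 1))
        = x + t.length := by
      refine le_antisymm (lp_le fun z hz => ?_) (le_lp hsO)
      have h1 := hOub z hz
      have h2 := filter_mem_mod z hz
      omega
    rw [hLpE] at hxiLp
    rw [hLpO] at hetaLp
    left
    constructor <;> omega
  · -- claim (iii)
    intro heven
    rw [hhead] at heven ⊢
    have hx2 : x % 2 = 0 := Nat.even_iff.mp heven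
    -- y = x
    have hcnt2 : 2 ≤ (x :: y :: t).count x := by
      have he := hD x heven
      have h1 : 1 ≤ (x :: y :: t).count x := List.count_pos_iff.mpr (by simp)
      rcases he with ⟨w, hw⟩; omega
    have hyx : y = x := by
      have h3 : x ∈ y :: t := by
        rw [List.count_cons] at hcnt2
        simp only [beq_self_eq_true, if_true] at hcnt2
        exact List.count_pos_iff.mp (by omega)
      have h4 : x ≥ y := (List.pairwise_cons.mp hsort).1 y (by simp)
      rcases List.mem_cons.mp h3 with h | h
      · omega
      · have := (List.pairwise_cons.mp hsort.of_cons).1 x h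
        omega
    have hsecmem' : x + t.length ∈ starSeq (x :: y :: t) := by
      have e : x + t.length = y + t.length := by omega
      rw [e]; exact hsecmem
    have htO : x + (t.length + 1) ∈
        (starSeq (x :: y :: t)).filter (fun x => x % 2 = 1) :=
      List.mem_filter.mpr ⟨htopmem, by simp; omega⟩
    have hLpO : Lp ((starSeq (x :: y :: t)).filter (fun x => x % 2 = 1))
        = x + (t.length + 1) :=
      le_antisymm (lp_le hOub) (le_lp htO)
    have hsE : x + t.length ∈
        (starSeq (x :: y :: t)).filter (fun x => x % 2 = 0) :=
      List.mem_filter.mpr ⟨hsecmem', by simp; omega⟩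
    have hLpE : Lp ((starSeq (x :: y :: t)).filter (fun x => x % 2 = 0))
        = x + t.length := by
      refine le_antisymm (lp_le fun z hz => ?_) (le_lp hsE)
      have h1 := hEub z hz
      have h2 := filter_mem_mod z hz
      omega
    rw [hLpE] at hxiLp
    rw [hLpO] at hetaLp
    constructor <;> omega

end Stmt5
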